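/- Let E ∈ ℝ^{k×N}, A ∈ ℝ^{m×N}, C ∈ ℝ^{p×N}, y ∈ ℝ^m, d ∈ ℝ^p. If the feasible set {x : Ax = y, Cx ≥ d} is nonempty, then the problem of minimizing ‖Ex‖₁ over this feasible set attains an optimal solution. -/

import Mathlib

def BPPoly {n : ℕ} (S : Set (Fin n → ℝ)) : Prop :=
  ∃ (ι : Type) (_ : Fintype ι) (a : ι → Fin n → ℝ) (c : ι → ℝ),
    S = {x | ∀ i, c i ≤ ∑ j, a i j * x j}

theorem BPPoly.isClosed {n : ℕ} {S : Set (Fin n → ℝ)} (h : BPPoly S) : IsClosed S := by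
  obtain ⟨ι, _, a, c, rfl⟩ := h
  have : {x : Fin n → ℝ | ∀ i, c i ≤ ∑ j, a i j * x j}
      = ⋂ i, {x | c i ≤ ∑ j, a i j * x j} := by
    ext x; simp [Set.mem_iInter]
  rw [this]
  refine isClosed_iInter fun i => isClosed_le continuous_const ?_
  exact continuous_finset_sum _ fun j _ => continuous_const.mul (continuous_apply j)

theorem ratio_le {bp bi rp ri : ℝ} (hbp : 0 < bp) (hbi : bi < 0)
    (h : bp * ri ≤ bi * rp) : rp / bp ≤ ri / bi := by
  rw [le_div_iff_of_neg hbi, div_mul_eq_mul_div, le_div_iff₀ hbp]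
  linarith

theorem FM_core {ι : Type} [Fintype ι] (b r : ι → ℝ) :
    (∃ t, ∀ i, r i ≤ b i * t) ↔
      ((∀ i, b i = 0 → r i ≤ 0) ∧ ∀ i j, 0 < b i → b j < 0 → b i * r j ≤ b j * r i) := by
  constructor
  · rintro ⟨t, ht⟩
    refine ⟨fun i hi => by have := ht i; rw [hi, zero_mul] at this; exact this,
      fun i j hi hj => ?_⟩
    nlinarith [mul_le_mul_of_nonneg_left (ht j) hi.le,
      mul_le_mul_of_nonpos_left (ht i) hj.le]
  · rintro ⟨h1, h2⟩
    classical
    set P : Finset ι := Finset.univ.filter (fun i => 0 < b i) with hPdef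
    set Nn : Finset ι := Finset.univ.filter (fun i => b i < 0) with hNdef
    by_cases hP : P.Nonempty
    · refine ⟨P.sup' hP (fun i => r i / b i), fun i => ?_⟩
      rcases lt_trichotomy (b i) 0 with hi | hi | hi
      · rw [show (r i ≤ b i * P.sup' hP (fun i => r i / b i)) ↔
            P.sup' hP (fun i => r i / b i) ≤ r i / b i from by
          rw [le_div_iff_of_neg hi, mul_comm]]
        refine Finset.sup'_le _ _ fun p hp => ?_
        have hp' : 0 < b p := by simpa [hPdef] using hp
        exact ratio_le hp' hi (h2 p i hp' hi)
      · rw [hi, zero_mul]; exact h1 i hi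
      · rw [show (r i ≤ b i * P.sup' hP (fun i => r i / b i)) ↔
            r i / b i ≤ P.sup' hP (fun i => r i / b i) from by
          rw [div_le_iff₀ hi, mul_comm]]
        have hiP : i ∈ P := by simp [hPdef, hi]
        exact Finset.le_sup' (fun i => r i / b i) hiP
    · by_cases hN : Nn.Nonempty
      · refine ⟨Nn.inf' hN (fun i => r i / b i), fun i => ?_⟩
        rcases lt_trichotomy (b i) 0 with hi | hi | hi
        · rw [show (r i ≤ b i * Nn.inf' hN (fun i => r i / b i)) ↔
              Nn.inf' hN (fun i => r i / b i) ≤ r i / b i from by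
            rw [le_div_iff_of_neg hi, mul_comm]]
          have hiN : i ∈ Nn := by simp [hNdef, hi]
          exact Finset.inf'_le (fun i => r i / b i) hiN
        · rw [hi, zero_mul]; exact h1 i hi
        · exact absurd (Finset.nonempty_of_ne_empty (by
            intro hc
            exact absurd (hc ▸ (by simpa [hPdef] using hi : i ∈ P)) (by simp))) hP
      · refine ⟨0, fun i => ?_⟩
        rcases lt_trichotomy (b i) 0 with hi | hi | hi
        · exact absurd ⟨i, by simpa [hNdef] using hi⟩ hN
        · rw [hi, zero_mul]; exact h1 i hi
        · exact absurd ⟨i, by simpa [hPdef] using hi⟩ hP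

theorem BPPoly.proj {n : ℕ} {S : Set (Fin (n + 1) → ℝ)} (h : BPPoly S) :
    BPPoly {x : Fin n → ℝ | ∃ t, Fin.snoc x t ∈ S} := by
  classical
  obtain ⟨ι, _, a, c, rfl⟩ := h
  set b : ι → ℝ := fun i => a i (Fin.last n) with hb
  set a' : ι → Fin n → ℝ := fun i j => a i j.castSucc with ha'
  refine ⟨ι ⊕ ι × ι, inferInstance,
    Sum.elim (fun i => if b i = 0 then a' i else 0)
      (fun ij => if 0 < b ij.1 ∧ b ij.2 < 0 then
        (fun l => b ij.1 * a' ij.2 l - b ij.2 * a' ij.1 l) else 0),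
    Sum.elim (fun i => if b i = 0 then c i else 0)
      (fun ij => if 0 < b ij.1 ∧ b ij.2 < 0 then b ij.1 * c ij.2 - b ij.2 * c ij.1 else 0),
    ?_⟩
  ext x
  have hsum : ∀ (i : ι) (t : ℝ), ∑ j : Fin (n + 1), a i j * (Fin.snoc x t : Fin (n + 1) → ℝ) j
      = (∑ j : Fin n, a' i j * x j) + b i * t := by
    intro i t
    rw [Fin.sum_univ_castSucc]
    simp [ha', hb]
  simp only [Set.mem_setOf_eq]
  constructor
  · rintro ⟨t, ht⟩
    rintro (i | ⟨i, j⟩)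
    · by_cases hi : b i = 0
      · have := ht i
        rw [hsum, hi, zero_mul, add_zero] at this
        simpa [hi] using this
      · simp [hi]
    · by_cases hij : 0 < b i ∧ b j < 0
      · have h1 := ht i
        have h2 := ht j
        rw [hsum] at h1 h2
        have key : b i * (c j - ∑ l, a' j l * x l) ≤ b j * (c i - ∑ l, a' i l * x l) :=
          (FM_core b (fun i => c i - ∑ l, a' i l * x l)).1
            ⟨t, fun i' => by have := ht i'; rw [hsum] at this; linarith⟩
            |>.2 i j hij.1 hij.2
        simp only [Sum.elim_inr]
        rw [if_pos hij, if_pos hij]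
        have : ∑ l, (b i * a' j l - b j * a' i l) * x l
            = b i * (∑ l, a' j l * x l) - b j * (∑ l, a' i l * x l) := by
          simp only [sub_mul, mul_assoc]
          rw [Finset.sum_sub_distrib, ← Finset.mul_sum, ← Finset.mul_sum]
        rw [this]
        nlinarith [key]
      · simp [hij]
  · intro hx
    have := (FM_core b (fun i => c i - ∑ l, a' i l * x l)).2 ?_
    · obtain ⟨t, ht⟩ := this
      exact ⟨t, fun i => by rw [hsum]; have := ht i; linarith⟩
    constructor
    · intro i hi
      have := hx (Sum.inl i)
      simp only [Sum.elim_inl, hi, if_true] at this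
      linarith
    · intro i j hi hj
      have := hx (Sum.inr (i, j))
      have hij : 0 < b i ∧ b j < 0 := ⟨hi, hj⟩
      simp only [Sum.elim_inr] at this
      rw [if_pos hij, if_pos hij] at this
      have heq : ∑ l, (b i * a' j l - b j * a' i l) * x l
          = b i * (∑ l, a' j l * x l) - b j * (∑ l, a' i l * x l) := by
        simp only [sub_mul, mul_assoc]
        rw [Finset.sum_sub_distrib, ← Finset.mul_sum, ← Finset.mul_sum]
      rw [heq] at this
      nlinarith [this]

theorem BPPoly.multiProj (M : ℕ) {k : ℕ} (S : Set (Fin (k + M) → ℝ)) (h : BPPoly S) :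
    BPPoly {u : Fin k → ℝ | ∃ z ∈ S, ∀ i, z (Fin.castAdd M i) = u i} := by
  induction M with
  | zero =>
    have h0 : ∀ i : Fin k, Fin.castAdd 0 i = i := fun i => Fin.ext rfl
    have : {u : Fin k → ℝ | ∃ z ∈ S, ∀ i, z (Fin.castAdd 0 i) = u i} = S := by
      ext u
      constructor
      · rintro ⟨z, hz, he⟩
        have : z = u := funext fun i => by rw [← he i, h0 i]
        exact this ▸ hz
      · intro hu
        exact ⟨u, hu, fun i => by rw [h0 i]⟩
    rw [this]; exact h
  | succ M ih =>
    have hproj := BPPoly.proj (n := k + M) (S := S) h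
    have := ih _ hproj
    have heq : {u : Fin k → ℝ | ∃ w ∈ {w : Fin (k + M) → ℝ | ∃ t, Fin.snoc w t ∈ S},
        ∀ i, w (Fin.castAdd M i) = u i}
        = {u : Fin k → ℝ | ∃ z ∈ S, ∀ i, z (Fin.castAdd (M + 1) i) = u i} := by
      ext u
      constructor
      · rintro ⟨w, ⟨t, hwt⟩, he⟩
        refine ⟨Fin.snoc w t, hwt, fun i => ?_⟩
        have hc : Fin.castAdd (M + 1) i = Fin.castSucc (Fin.castAdd M i) := Fin.ext rfl
        rw [hc, Fin.snoc_castSucc]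
        exact he i
      · rintro ⟨z, hz, he⟩
        refine ⟨fun j => z (Fin.castSucc j), ⟨z (Fin.last _), ?_⟩, fun i => ?_⟩
        · have : (Fin.snoc (fun j => z (Fin.castSucc j)) (z (Fin.last _)) : Fin (k+M+1) → ℝ) = z := by
            funext j
            refine Fin.lastCases ?_ (fun j => ?_) j
            · rw [Fin.snoc_last]; rfl
            · rw [Fin.snoc_castSucc]
          rw [this]; exact hz
        · have hc : Fin.castSucc (Fin.castAdd M i) = Fin.castAdd (M + 1) i := Fin.ext rfl
          show z ((Fin.castAdd M i).castSucc) = u i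
          rw [hc]; exact he i
    rw [← heq]; exact this

theorem BPPoly.image {N k : ℕ} (E : Matrix (Fin k) (Fin N) ℝ) {S : Set (Fin N → ℝ)}
    (h : BPPoly S) : BPPoly {u : Fin k → ℝ | ∃ x ∈ S, E.mulVec x = u} := by
  classical
  obtain ⟨ι, _, a, c, hS⟩ := h
  set G : Set (Fin (k + N) → ℝ) :=
    {z | (fun j => z (Fin.natAdd k j)) ∈ S ∧
      ∀ i : Fin k, z (Fin.castAdd N i) = ∑ j, E i j * z (Fin.natAdd k j)} with hG
  have hGpoly : BPPoly G := by
    refine ⟨ι ⊕ (Fin k ⊕ Fin k), inferInstance,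
      Sum.elim (fun i => Fin.addCases (fun _ => 0) (a i))
        (Sum.elim
          (fun i => Fin.addCases (fun i' => if i' = i then 1 else 0) (fun j => -E i j))
          (fun i => Fin.addCases (fun i' => if i' = i then -1 else 0) (fun j => E i j))),
      Sum.elim c (Sum.elim (fun _ => 0) (fun _ => 0)), ?_⟩
    ext z
    simp only [hG, Set.mem_setOf_eq, hS]
    constructor
    · rintro ⟨hzS, hzE⟩
      rintro (i | i | i)
      · simpa [Fin.sum_univ_add] using hzS i
      · have := hzE i
        simp [Fin.sum_univ_add, ite_mul, Finset.sum_ite_eq', neg_mul, Finset.sum_neg_distrib]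
        linarith
      · have := hzE i
        simp [Fin.sum_univ_add, ite_mul, Finset.sum_ite_eq', neg_mul]
        linarith
    · intro hz
      constructor
      · intro i
        simpa [Fin.sum_univ_add] using hz (Sum.inl i)
      · intro i
        have h1 := hz (Sum.inr (Sum.inl i))
        have h2 := hz (Sum.inr (Sum.inr i))
        simp [Fin.sum_univ_add, ite_mul, Finset.sum_ite_eq', neg_mul,
          Finset.sum_neg_distrib] at h1 h2
        linarith
  have := BPPoly.multiProj N G hGpoly
  have heq : {u : Fin k → ℝ | ∃ z ∈ G, ∀ i, z (Fin.castAdd N i) = u i}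
      = {u : Fin k → ℝ | ∃ x ∈ S, E.mulVec x = u} := by
    ext u
    constructor
    · rintro ⟨z, ⟨hzS, hzE⟩, he⟩
      refine ⟨fun j => z (Fin.natAdd k j), hzS, ?_⟩
      funext i
      rw [Matrix.mulVec]
      simp only [dotProduct]
      rw [← hzE i, he i]
    · rintro ⟨x, hx, rfl⟩
      refine ⟨Fin.addCases (fun i => E.mulVec x i) x, ⟨?_, ?_⟩, fun i => ?_⟩
      · simpa using hx
      · intro i
        simp [Matrix.mulVec, dotProduct]
      · simp
  rw [← heq]; exact this

theorem l1_min_on_closed {k : ℕ} (T : Set (Fin k → ℝ)) (hT : IsClosed T)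
    (hne : T.Nonempty) : ∃ u ∈ T, ∀ v ∈ T, (∑ i, |u i|) ≤ ∑ i, |v i| := by
  obtain ⟨u0, hu0⟩ := hne
  set f : (Fin k → ℝ) → ℝ := fun u => ∑ i, |u i| with hf
  have hfcont : Continuous f := continuous_finset_sum _ fun i _ => (continuous_apply i).abs
  set c : ℝ := f u0 with hc
  have hc0 : 0 ≤ c := Finset.sum_nonneg fun i _ => abs_nonneg _
  set K : Set (Fin k → ℝ) := T ∩ {u | f u ≤ c} with hK
  have hKsub : K ⊆ Metric.closedBall 0 c := by
    intro u hu
    rw [Metric.mem_closedBall, dist_zero_right]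
    rw [pi_norm_le_iff_of_nonneg hc0]
    intro i
    calc ‖u i‖ = |u i| := rfl
      _ ≤ f u := Finset.single_le_sum (fun j _ => abs_nonneg (u j)) (Finset.mem_univ i)
      _ ≤ c := hu.2
  have hKclosed : IsClosed K := hT.inter (isClosed_le hfcont continuous_const)
  have hKcompact : IsCompact K :=
    (isCompact_closedBall (0 : Fin k → ℝ) c).of_isClosed_subset hKclosed hKsub
  have hKne : K.Nonempty := ⟨u0, hu0, show f u0 ≤ c from le_of_eq rfl⟩
  obtain ⟨u, huK, hmin⟩ := hKcompact.exists_isMinOn hKne hfcont.continuousOn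
  refine ⟨u, huK.1, fun v hv => ?_⟩
  by_cases hvc : f v ≤ c
  · exact hmin ⟨hv, hvc⟩
  · exact le_trans (hmin ⟨hu0, show f u0 ≤ c from le_of_eq rfl⟩) (le_of_not_ge hvc)

/-- The problem `min ‖Ex‖₁ s.t. Ax = y, Cx ≥ d` attains an optimal solution whenever
it is feasible. -/
theorem BP_like_existence
    (k m p N : ℕ) (E : Matrix (Fin k) (Fin N) ℝ) (A : Matrix (Fin m) (Fin N) ℝ)
    (C : Matrix (Fin p) (Fin N) ℝ) (y : Fin m → ℝ) (d : Fin p → ℝ)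
    (hfeas : ∃ x : Fin N → ℝ, A.mulVec x = y ∧ ∀ i, d i ≤ C.mulVec x i) :
    ∃ xstar : Fin N → ℝ, (A.mulVec xstar = y ∧ ∀ i, d i ≤ C.mulVec xstar i) ∧
      ∀ x : Fin N → ℝ, (A.mulVec x = y ∧ ∀ i, d i ≤ C.mulVec x i) →
        (∑ i, |E.mulVec xstar i|) ≤ ∑ i, |E.mulVec x i| := by
  set S : Set (Fin N → ℝ) := {x | A.mulVec x = y ∧ ∀ i, d i ≤ C.mulVec x i} with hSdef
  have hSpoly : BPPoly S := by
    refine ⟨Fin m ⊕ Fin m ⊕ Fin p, inferInstance,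
      Sum.elim (fun i => A i) (Sum.elim (fun i => fun j => -A i j) (fun i => C i)),
      Sum.elim y (Sum.elim (fun i => -y i) d), ?_⟩
    ext x
    simp only [hSdef, Set.mem_setOf_eq]
    constructor
    · rintro ⟨hA, hC⟩
      rintro (i | i | i)
      · simpa [Matrix.mulVec, dotProduct] using (congrFun hA i).ge
      · have := (congrFun hA i).le
        simp only [Sum.elim_inr, Sum.elim_inl]
        have hs : ∑ j, -A i j * x j = -∑ j, A i j * x j := by
          simp [neg_mul]
        rw [hs]
        have : A.mulVec x i = ∑ j, A i j * x j := rfl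
        linarith [this ▸ (congrFun hA i).le]
      · simpa [Matrix.mulVec, dotProduct] using hC i
    · intro hx
      constructor
      · funext i
        have h1 := hx (Sum.inl i)
        have h2 := hx (Sum.inr (Sum.inl i))
        simp only [Sum.elim_inl, Sum.elim_inr] at h1 h2
        have hs : ∑ j, -A i j * x j = -∑ j, A i j * x j := by simp [neg_mul]
        rw [hs] at h2
        have : A.mulVec x i = ∑ j, A i j * x j := rfl
        rw [this]
        linarith
      · intro i
        simpa [Matrix.mulVec, dotProduct] using hx (Sum.inr (Sum.inr i))
  set T : Set (Fin k → ℝ) := {u | ∃ x ∈ S, E.mulVec x = u} with hTdef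
  have hTpoly : BPPoly T := BPPoly.image E hSpoly
  have hTne : T.Nonempty := by
    obtain ⟨x0, hx0⟩ := hfeas
    exact ⟨E.mulVec x0, x0, hx0, rfl⟩
  obtain ⟨u, huT, hmin⟩ := l1_min_on_closed T hTpoly.isClosed hTne
  obtain ⟨xstar, hxstar, hEx⟩ := huT
  refine ⟨xstar, hxstar, fun x hx => ?_⟩
  have hxT : E.mulVec x ∈ T := ⟨x, hx, rfl⟩
  have := hmin (E.mulVec x) hxT
  rw [hEx]
  exact this
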